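/- arXiv:2206.07875 — 2 statements merged into one kernel-verified Lean document; each statement's English description precedes it below -/
import Mathlib

section
/- Let H be a symmetric positive definite real n×n matrix and let ℓ : ℝⁿ → ℝ be convex and differentiable with L-Lipschitz gradient, L > 0. Let s > 0, β > 0, let w ∈ ℝⁿ, and set v := w − s·β·H⁻¹∇ℓ(w). Then for every u ∈ ℝⁿ: β·ℓ(u) ≥ β·ℓ(v) − (1/(2s))·‖u − w‖²_H + (1/(2s))·‖u − v‖²_H + (1/(2s))·(1 − s·β·L/λ_min(H))·‖w − v‖²_H. -/
open scoped RealInnerProductSpace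
open Filter Topology

/-- The `H`-inner product `⟨u, v⟩_H = uᵀ H v` on `ℝⁿ`. -/
noncomputable def hIP {n : ℕ} (H : Matrix (Fin n) (Fin n) ℝ)
    (u v : EuclideanSpace ℝ (Fin n)) : ℝ :=
  ⟪u, Matrix.toEuclideanLin H v⟫

/-- The `H`-norm `‖u‖_H = √(uᵀ H u)` on `ℝⁿ`. -/
noncomputable def hNorm {n : ℕ} (H : Matrix (Fin n) (Fin n) ℝ)
    (u : EuclideanSpace ℝ (Fin n)) : ℝ :=
  Real.sqrt (hIP H u u)

/-- The smallest eigenvalue `λ_min(H)` of a Hermitian matrix `H`. -/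
noncomputable def lambdaMin {n : ℕ} (H : Matrix (Fin n) (Fin n) ℝ)
    (hH : H.IsHermitian) : ℝ :=
  ⨅ i, hH.eigenvalues i

lemma line_hasDerivAt {n : ℕ} (ℓ : EuclideanSpace ℝ (Fin n) → ℝ) (hdiff : Differentiable ℝ ℓ)
    (x d : EuclideanSpace ℝ (Fin n)) (t : ℝ) :
    HasDerivAt (fun t : ℝ => ℓ (x + t • d)) ⟪gradient ℓ (x + t • d), d⟫ t := by
  have hline : HasDerivAt (fun t : ℝ => x + t • d) d t := by
    simpa using ((hasDerivAt_id t).smul_const d).const_add x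
  have hg : HasFDerivAt ℓ ((InnerProductSpace.toDual ℝ _) (gradient ℓ (x + t • d))) (x + t • d) :=
    (hasGradientAt_iff_hasFDerivAt).1 (hdiff _).hasGradientAt
  exact hg.comp_hasDerivAt t hline

lemma convex_grad_ineq {n : ℕ} (ℓ : EuclideanSpace ℝ (Fin n) → ℝ)
    (hconv : ConvexOn ℝ Set.univ ℓ) (hdiff : Differentiable ℝ ℓ)
    (x y : EuclideanSpace ℝ (Fin n)) :
    ℓ x + ⟪gradient ℓ x, y - x⟫ ≤ ℓ y := by
  set φ : ℝ → ℝ := fun t => ℓ (x + t • (y - x)) with hφ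
  have hcφ : ConvexOn ℝ Set.univ φ := by
    have := hconv.comp_affineMap (AffineMap.lineMap x y)
    simp only [Set.preimage_univ] at this
    refine (show φ = ℓ ∘ AffineMap.lineMap x y from ?_) ▸ this
    funext t
    simp [hφ, AffineMap.lineMap_apply, add_comm]
  have hd : HasDerivAt φ ⟪gradient ℓ x, y - x⟫ 0 := by
    simpa using line_hasDerivAt ℓ hdiff x (y - x) 0
  have := hcφ.le_slope_of_hasDerivAt (Set.mem_univ 0) (Set.mem_univ 1) one_pos hd
  rw [slope_def_field] at this
  simp only [hφ, one_smul, zero_smul, add_zero, sub_zero, div_one, add_sub_cancel] at this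
  linarith

lemma descent_ineq {n : ℕ} (ℓ : EuclideanSpace ℝ (Fin n) → ℝ) (hdiff : Differentiable ℝ ℓ)
    (L : ℝ)
    (hLip : ∀ u v, ‖gradient ℓ u - gradient ℓ v‖ ≤ L * ‖u - v‖)
    (x y : EuclideanSpace ℝ (Fin n)) :
    ℓ y ≤ ℓ x + ⟪gradient ℓ x, y - x⟫ + L / 2 * ‖y - x‖ ^ 2 := by
  set d := y - x with hd
  set ψ : ℝ → ℝ := fun t => ℓ (x + t • d) - t * ⟪gradient ℓ x, d⟫ - L * ‖d‖ ^ 2 * t ^ 2 / 2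
    with hψ
  have hder : ∀ t : ℝ, HasDerivAt ψ
      (⟪gradient ℓ (x + t • d), d⟫ - ⟪gradient ℓ x, d⟫ - L * ‖d‖ ^ 2 * t) t := by
    intro t
    have h1 := line_hasDerivAt ℓ hdiff x d t
    have h2 : HasDerivAt (fun t : ℝ => t * ⟪gradient ℓ x, d⟫) ⟪gradient ℓ x, d⟫ t := by
      simpa using (hasDerivAt_id t).mul_const (⟪gradient ℓ x, d⟫)
    have h3 : HasDerivAt (fun t : ℝ => L * ‖d‖ ^ 2 * t ^ 2 / 2) (L * ‖d‖ ^ 2 * t) t := by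
      have := ((hasDerivAt_pow 2 t).const_mul (L * ‖d‖ ^ 2)).div_const 2
      refine this.congr_deriv ?_
      ring
    exact (h1.sub h2).sub h3
  have hanti : AntitoneOn ψ (Set.Icc (0:ℝ) 1) := by
    apply antitoneOn_of_deriv_nonpos (convex_Icc 0 1)
    · exact fun t _ => ((hder t).differentiableAt).continuousAt.continuousWithinAt
    · exact fun t _ => ((hder t).differentiableAt).differentiableWithinAt
    · intro t ht
      rw [interior_Icc] at ht
      rw [(hder t).deriv]
      have key : ⟪gradient ℓ (x + t • d), d⟫ - ⟪gradient ℓ x, d⟫ ≤ L * ‖d‖ ^ 2 * t := by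
        have h1 : ⟪gradient ℓ (x + t • d) - gradient ℓ x, d⟫
            ≤ ‖gradient ℓ (x + t • d) - gradient ℓ x‖ * ‖d‖ := real_inner_le_norm _ _
        have h2 : ‖gradient ℓ (x + t • d) - gradient ℓ x‖ ≤ L * ‖t • d‖ := by
          simpa using hLip (x + t • d) x
        have h3 : ‖t • d‖ = t * ‖d‖ := by
          rw [norm_smul, Real.norm_eq_abs, abs_of_pos ht.1]
        rw [inner_sub_left] at h1
        rw [h3] at h2
        nlinarith [mul_le_mul_of_nonneg_right h2 (norm_nonneg d)]
      linarith
  have h01 := hanti (Set.left_mem_Icc.2 zero_le_one) (Set.right_mem_Icc.2 zero_le_one)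
    zero_le_one
  simp only [hψ, zero_smul, add_zero, one_smul, zero_mul, one_pow, zero_pow, mul_one,
    sub_zero, mul_zero, zero_div] at h01
  have hy : x + d = y := by rw [hd]; abel
  rw [hy] at h01
  linarith

lemma lambdaMin_le {n : ℕ} (H : Matrix (Fin n) (Fin n) ℝ) (hH : H.IsHermitian)
    (x : EuclideanSpace ℝ (Fin n)) :
    lambdaMin H hH * ‖x‖ ^ 2 ≤ ⟪x, Matrix.toEuclideanLin H x⟫ := by
  set b := hH.eigenvectorBasis with hb
  set μ := hH.eigenvalues with hμ
  set T := Matrix.toEuclideanLin H with hT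
  have hsymm : (Matrix.toEuclideanLin H).IsSymmetric :=
    Matrix.isHermitian_iff_isSymmetric.1 hH
  have hTb : ∀ i, T (b i) = μ i • b i := by
    intro i
    have := hH.mulVec_eigenvectorBasis i
    apply PiLp.ext
    intro j
    have := congrFun this j
    simpa [hT, Matrix.toEuclideanLin_apply] using this
  have hrepr : ∀ i, b.repr (T x) i = μ i * b.repr x i := by
    intro i
    rw [b.repr_apply_apply, b.repr_apply_apply, ← hsymm (b i) x, hTb i]
    simp [real_inner_smul_left, Finset.mul_sum, mul_assoc]
  have hinner : ⟪x, T x⟫ = ∑ i, μ i * (b.repr x i) ^ 2 := by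
    rw [← b.repr.inner_map_map x (T x)]
    rw [PiLp.inner_apply]
    congr 1; funext i
    rw [hrepr i]
    simp [RCLike.inner_apply]
    ring
  have hnorm : ‖x‖ ^ 2 = ∑ i, (b.repr x i) ^ 2 := by
    rw [← real_inner_self_eq_norm_sq, ← b.repr.inner_map_map x x, PiLp.inner_apply]
    congr 1; funext i
    simp [RCLike.inner_apply]
  rw [hinner, hnorm, Finset.mul_sum]
  apply Finset.sum_le_sum
  intro i _
  have hmin : lambdaMin H hH ≤ μ i :=
    ciInf_le (Set.Finite.bddBelow (Set.finite_range _)) i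
  nlinarith [sq_nonneg (b.repr x i)]

/-- descent inequality for one preconditioned gradient step
`v = w − s·β·H⁻¹∇ℓ(w)`. -/
theorem stmt_3 {n : ℕ} (H : Matrix (Fin n) (Fin n) ℝ) (hH : H.PosDef)
    (ℓ : EuclideanSpace ℝ (Fin n) → ℝ)
    (hconv : ConvexOn ℝ Set.univ ℓ) (hdiff : Differentiable ℝ ℓ)
    (L : ℝ) (hL : 0 < L)
    (hLip : ∀ u v, ‖gradient ℓ u - gradient ℓ v‖ ≤ L * ‖u - v‖)
    (s β : ℝ) (hs : 0 < s) (hβ : 0 < β)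
    (w v : EuclideanSpace ℝ (Fin n))
    (hv : v = w - (s * β) • Matrix.toEuclideanLin H⁻¹ (gradient ℓ w)) :
    ∀ u, β * ℓ u ≥
        β * ℓ v - (1 / (2 * s)) * hNorm H (u - w) ^ 2
          + (1 / (2 * s)) * hNorm H (u - v) ^ 2
          + (1 / (2 * s)) * (1 - s * β * L / lambdaMin H hH.1) *
              hNorm H (w - v) ^ 2 := by
  intro u
  rcases isEmpty_or_nonempty (Fin n) with hn | hn
  · -- trivial case : the space is a subsingleton
    have hsub : Subsingleton (EuclideanSpace ℝ (Fin n)) := by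
      constructor; intro a b; apply PiLp.ext; intro i; exact absurd i.2 (by simp [hn.false i])
    have huv : u = v := Subsingleton.elim u v
    have hz : ∀ z : EuclideanSpace ℝ (Fin n), hNorm H z = 0 := by
      intro z
      have : z = 0 := Subsingleton.elim z 0
      simp [this, hNorm, hIP]
    rw [huv, hz, hz, hz]
    ring_nf
    simp
  · -- main case
    set g := gradient ℓ w with hg
    set T := Matrix.toEuclideanLin H with hT
    have hsymm : (Matrix.toEuclideanLin H).IsSymmetric :=
      Matrix.isHermitian_iff_isSymmetric.1 hH.1
    set lm := lambdaMin H hH.1 with hlm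
    -- positivity of lm
    have hlmpos : 0 < lm := by
      obtain ⟨i, hi⟩ := Finite.exists_min hH.1.eigenvalues
      exact lt_of_lt_of_le (hH.eigenvalues_pos i) (le_ciInf hi)
    -- nonnegativity of the quadratic form, and hNorm squared
    have hQ : ∀ z : EuclideanSpace ℝ (Fin n), (0:ℝ) ≤ ⟪z, T z⟫ := by
      intro z
      have := lambdaMin_le H hH.1 z
      nlinarith [sq_nonneg ‖z‖, norm_nonneg z]
    have hNsq : ∀ z : EuclideanSpace ℝ (Fin n), hNorm H z ^ 2 = ⟪z, T z⟫ := by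
      intro z
      rw [hNorm]
      exact Real.sq_sqrt (hQ z)
    -- H(w-v) = (s β) g
    have hTw : T (w - v) = (s * β) • g := by
      have hdet : H.det ≠ 0 := ne_of_gt hH.det_pos
      have hwv : w - v = (s * β) • Matrix.toEuclideanLin H⁻¹ g := by
        rw [hv]; abel
      rw [hwv, map_smul]
      congr 1
      rw [hT, Matrix.toEuclideanLin_apply H⁻¹, Matrix.toEuclideanLin_apply_piLp_toLp,
        Matrix.mulVec_mulVec, Matrix.mul_nonsing_inv H (isUnit_iff_ne_zero.2 hdet),
        Matrix.one_mulVec]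
    -- parallelogram identity
    have hpar : ∀ a b : EuclideanSpace ℝ (Fin n),
        2 * ⟪a, T b⟫ = ⟪a, T a⟫ + ⟪b, T b⟫ - ⟪a - b, T (a - b)⟫ := by
      intro a b
      have e2 : ⟪b, T a⟫ = ⟪a, T b⟫ := by
        rw [← hsymm b a]; exact real_inner_comm _ _
      rw [map_sub, inner_sub_left, inner_sub_right, inner_sub_right, e2]
      ring
    -- convexity and descent
    have hA := convex_grad_ineq ℓ hconv hdiff w u
    have hB := descent_ineq ℓ hdiff L hLip w v
    -- inner product decomposition
    have hdec : ⟪g, u - w⟫ = ⟪g, v - w⟫ + ⟪g, u - v⟫ := by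
      simp only [inner_sub_right]; ring
    -- the key inner-product value
    have hval : (s * β) * ⟪g, u - v⟫
        = (hNorm H (u - v) ^ 2 + hNorm H (w - v) ^ 2 - hNorm H (u - w) ^ 2) / 2 := by
      have h1 : ⟪u - v, T (w - v)⟫ = (s * β) * ⟪g, u - v⟫ := by
        rw [hTw, real_inner_smul_right, real_inner_comm]
      have e1 : u - w = (u - v) - (w - v) := by abel
      rw [hNsq, hNsq, hNsq, e1]
      linarith [hpar (u - v) (w - v), h1]
    -- eigenvalue bound on the last term
    have hbound : lm * ‖v - w‖ ^ 2 ≤ hNorm H (w - v) ^ 2 := by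
      rw [hNsq, norm_sub_rev]
      exact lambdaMin_le H hH.1 (w - v)
    -- combine
    have hc1 : β * ℓ w + β * ⟪g, u - w⟫ ≤ β * ℓ u := by
      nlinarith [hA]
    have hc2 : β * ℓ v ≤ β * ℓ w + β * ⟪g, v - w⟫ + β * (L / 2 * ‖v - w‖ ^ 2) := by
      nlinarith [hB]
    have hc3 : β * ⟪g, u - v⟫
        = (1 / (2 * s)) * hNorm H (u - v) ^ 2 + (1 / (2 * s)) * hNorm H (w - v) ^ 2
          - (1 / (2 * s)) * hNorm H (u - w) ^ 2 := by
      have hs' : s ≠ 0 := ne_of_gt hs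
      have e : β * ⟪g, u - v⟫ = (1 / (2 * s)) * (2 * ((s * β) * ⟪g, u - v⟫)) := by
        field_simp
      rw [e, hval]
      field_simp
    have hc4 : β * (L / 2 * ‖v - w‖ ^ 2) ≤ (1 / (2 * s)) * (s * β * L / lm) * hNorm H (w - v) ^ 2 := by
      have h5 : (β * L / (2 * lm)) * (lm * ‖v - w‖ ^ 2) ≤ (β * L / (2 * lm)) * hNorm H (w - v) ^ 2 :=
        mul_le_mul_of_nonneg_left hbound (by positivity)
      have e : (β * L / (2 * lm)) * (lm * ‖v - w‖ ^ 2) = β * (L / 2 * ‖v - w‖ ^ 2) := by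
        field_simp
      have e2 : (1 / (2 * s)) * (s * β * L / lm) = β * L / (2 * lm) := by
        field_simp
      rw [e] at h5
      rw [e2]
      exact h5
    have expand : (1 / (2 * s)) * (1 - s * β * L / lm) * hNorm H (w - v) ^ 2
        = (1 / (2 * s)) * hNorm H (w - v) ^ 2
          - (1 / (2 * s)) * (s * β * L / lm) * hNorm H (w - v) ^ 2 := by ring
    have hdec' : β * ⟪g, u - w⟫ = β * ⟪g, v - w⟫ + β * ⟪g, u - v⟫ := by
      rw [hdec]; ring
    rw [ge_iff_le, expand]
    linarith [hc1, hc2, hc3, hc4, hdec']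
end

section
/- Consider the aggregated iteration with D nonexpansive with respect to ‖·‖_H, ℓ convex and differentiable with L-Lipschitz gradient, α, μ ∈ (0,1), s ∈ (0, λ_min(H)/L), and U a nonempty closed convex subset of ℝⁿ. Set β_k := 1/(k+1) and η := (1−α)/α. Then for every u ∈ Fix(T) ∩ U and every k ≥ 0: μ·s·β_k·ℓ(u) ≥ μ·s·β_k·ℓ(v_u^{k+1}) − (1/2)·‖u − u^k‖²_H + (1/2)·‖u − u^{k+1}‖²_H + (1/2)·‖((1−μ)·v_l^{k+1} + μ·v_u^{k+1}) − u^{k+1}‖²_H + ((1−μ)·η/2)·‖u^k − v_l^{k+1}‖²_H + (μ/2)·(1 − s·β_k·L/λ_min(H))·‖u^k − v_u^{k+1}‖²_H. -/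
open scoped RealInnerProductSpace
open Filter Topology

section Aux

variable {n : ℕ} {H : Matrix (Fin n) (Fin n) ℝ}

lemma hIP_add_left (u v w : EuclideanSpace ℝ (Fin n)) :
    hIP H (u + v) w = hIP H u w + hIP H v w := by
  simp [hIP, inner_add_left]

lemma hIP_sub_left (u v w : EuclideanSpace ℝ (Fin n)) :
    hIP H (u - v) w = hIP H u w - hIP H v w := by
  simp [hIP, inner_sub_left]

lemma hIP_smul_left (c : ℝ) (u w : EuclideanSpace ℝ (Fin n)) :
    hIP H (c • u) w = c * hIP H u w := by
  simp [hIP, inner_smul_left]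

lemma hIP_add_right (u v w : EuclideanSpace ℝ (Fin n)) :
    hIP H u (v + w) = hIP H u v + hIP H u w := by
  simp [hIP, inner_add_right]

lemma hIP_sub_right (u v w : EuclideanSpace ℝ (Fin n)) :
    hIP H u (v - w) = hIP H u v - hIP H u w := by
  simp [hIP, inner_sub_right]

lemma hIP_smul_right (c : ℝ) (u w : EuclideanSpace ℝ (Fin n)) :
    hIP H u (c • w) = c * hIP H u w := by
  simp [hIP, inner_smul_right]

lemma hIP_symm (hH : H.IsHermitian) (u v : EuclideanSpace ℝ (Fin n)) :
    hIP H u v = hIP H v u := by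
  have hs := (Matrix.isHermitian_iff_isSymmetric).1 hH
  unfold hIP
  rw [← hs u v, real_inner_comm]

lemma hIP_self_nonneg (hH : H.PosDef) (x : EuclideanSpace ℝ (Fin n)) :
    0 ≤ hIP H x x := by
  rcases eq_or_ne x 0 with h | h
  · simp [hIP, h]
  · have := hH.dotProduct_mulVec_pos (x := (WithLp.equiv 2 _) x) (by simpa using h)
    have h2 : hIP H x x = dotProduct (star ((WithLp.equiv 2 (Fin n → ℝ)) x))
        (H.mulVec ((WithLp.equiv 2 (Fin n → ℝ)) x)) := by
      simp [hIP, Matrix.toEuclideanLin_apply, PiLp.inner_apply, dotProduct,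
        RCLike.inner_apply, mul_comm]
    rw [h2]
    simpa using this.le

lemma hNorm_sq (hH : H.PosDef) (x : EuclideanSpace ℝ (Fin n)) :
    hNorm H x ^ 2 = hIP H x x :=
  Real.sq_sqrt (hIP_self_nonneg hH x)

lemma hNorm_nonneg (x : EuclideanSpace ℝ (Fin n)) : 0 ≤ hNorm H x :=
  Real.sqrt_nonneg _

lemma hIP_inv_left (hH : H.PosDef) (y z : EuclideanSpace ℝ (Fin n)) :
    hIP H (Matrix.toEuclideanLin H⁻¹ y) z = ⟪y, z⟫ := by
  have hd : IsUnit H.det := isUnit_iff_ne_zero.2 (ne_of_gt hH.det_pos)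
  rw [hIP_symm hH.1]
  have : Matrix.toEuclideanLin H (Matrix.toEuclideanLin H⁻¹ y)
      = Matrix.toEuclideanLin (H * H⁻¹) y := by
    simp [Matrix.toEuclideanLin_apply, Matrix.mulVec_mulVec]
  unfold hIP
  rw [this, Matrix.mul_nonsing_inv _ hd, real_inner_comm]
  congr 1
  simp [Matrix.toEuclideanLin_apply]

lemma rayleigh_low (hH : H.PosDef) (x : EuclideanSpace ℝ (Fin n)) :
    lambdaMin H hH.1 * ‖x‖ ^ 2 ≤ hIP H x x := by
  classical
  set b := hH.1.eigenvectorBasis with hb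
  have hT : ∀ j, Matrix.toEuclideanLin H (b j) = hH.1.eigenvalues j • b j := by
    intro j
    have := hH.1.mulVec_eigenvectorBasis j
    apply (WithLp.equiv 2 (Fin n → ℝ)).injective
    simpa [Matrix.toEuclideanLin_apply] using congrArg id this
  have hsym := (Matrix.isHermitian_iff_isSymmetric).1 hH.1
  have hexp : hIP H x x = ∑ i, hH.1.eigenvalues i * ⟪x, b i⟫ ^ 2 := by
    unfold hIP
    rw [← b.sum_inner_mul_inner x (Matrix.toEuclideanLin H x)]
    apply Finset.sum_congr rfl
    intro i _
    have : ⟪b i, Matrix.toEuclideanLin H x⟫ = ⟪Matrix.toEuclideanLin H (b i), x⟫ :=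
      (hsym (b i) x).symm
    rw [this, hT i, real_inner_smul_left, real_inner_comm]
    ring
  have hnrm : ‖x‖ ^ 2 = ∑ i, ⟪x, b i⟫ ^ 2 := by
    rw [← real_inner_self_eq_norm_sq, ← b.sum_inner_mul_inner x x]
    apply Finset.sum_congr rfl
    intro i _
    rw [real_inner_comm (b i) x]; ring
  rw [hexp, hnrm, Finset.mul_sum]
  apply Finset.sum_le_sum
  intro i _
  have hle : lambdaMin H hH.1 ≤ hH.1.eigenvalues i :=
    ciInf_le (Set.Finite.bddBelow (Set.finite_range _)) i
  nlinarith [sq_nonneg ((inner ℝ x (b i) : ℝ))]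

lemma hIP_sq_mono (hH : H.PosDef) {x y : EuclideanSpace ℝ (Fin n)}
    (h : hNorm H x ≤ hNorm H y) : hIP H x x ≤ hIP H y y := by
  rw [← hNorm_sq hH, ← hNorm_sq hH]
  exact pow_le_pow_left₀ (hNorm_nonneg x) h 2

lemma proj_vi (hH : H.PosDef) {U : Set (EuclideanSpace ℝ (Fin n))} (hUco : Convex ℝ U)
    {p w q : EuclideanSpace ℝ (Fin n)} (hpU : p ∈ U) (hqU : q ∈ U)
    (hmin : ∀ z ∈ U, hNorm H (p - w) ≤ hNorm H (z - w)) :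
    hIP H (q - p) (w - p) ≤ 0 := by
  set C := hIP H (q - p) (q - p) with hC
  have hC0 : 0 ≤ C := hIP_self_nonneg hH _
  by_contra hcon
  push_neg at hcon
  set I := hIP H (q - p) (w - p) with hI
  have key : ∀ t : ℝ, 0 ≤ t → t ≤ 1 → 2 * t * I ≤ t ^ 2 * C := by
    intro t ht0 ht1
    have hz : (1 - t) • p + t • q ∈ U := hUco hpU hqU (by linarith) ht0 (by ring)
    have h2 := hIP_sq_mono hH (hmin _ hz)
    have hzw : (1 - t) • p + t • q - w = (p - w) + t • (q - p) := by
      module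
    rw [hzw] at h2
    have hexp : hIP H ((p - w) + t • (q - p)) ((p - w) + t • (q - p))
        = hIP H (p - w) (p - w) + t * hIP H (p - w) (q - p)
          + t * hIP H (q - p) (p - w) + t ^ 2 * C := by
      simp only [hIP_add_left, hIP_add_right, hIP_smul_left, hIP_smul_right, hC]
      ring
    rw [hexp] at h2
    have hsym : hIP H (p - w) (q - p) = hIP H (q - p) (p - w) := hIP_symm hH.1 _ _
    have hneg : hIP H (q - p) (p - w) = -I := by
      rw [hI, show p - w = -(w - p) from (neg_sub w p).symm]
      rw [show (-(w-p)) = (-1 : ℝ) • (w - p) by module, hIP_smul_right]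
      ring
    rw [hsym, hneg] at h2
    linarith
  have ht : 0 < min 1 (I / (C + 1)) := lt_min one_pos (div_pos hcon (by linarith))
  have h5 := key _ ht.le (min_le_left _ _)
  have h6 : min 1 (I / (C + 1)) ≤ I / (C + 1) := min_le_right _ _
  set t := min 1 (I / (C + 1)) with htd
  have h7 : t ^ 2 * C ≤ t * (I / (C + 1)) * C := by
    have : t * C ≤ (I / (C + 1)) * C := mul_le_mul_of_nonneg_right h6 hC0
    calc t ^ 2 * C = t * (t * C) := by ring
    _ ≤ t * ((I / (C + 1)) * C) := by
        apply mul_le_mul_of_nonneg_left this ht.le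
    _ = t * (I / (C + 1)) * C := by ring
  have h8 : I / (C + 1) * C < I := by
    rw [div_mul_eq_mul_div, div_lt_iff₀ (by linarith)]
    nlinarith
  nlinarith [mul_lt_mul_of_pos_left h8 ht]

variable {E : Type*} [NormedAddCommGroup E] [InnerProductSpace ℝ E] [CompleteSpace E]

lemma fderiv_apply_eq_inner_gradient (ℓ : E → ℝ) (z v : E) :
    fderiv ℝ ℓ z v = ⟪gradient ℓ z, v⟫ := by
  have : fderiv ℝ ℓ z = InnerProductSpace.toDual ℝ E (gradient ℓ z) := by
    rw [gradient, (InnerProductSpace.toDual ℝ E).apply_symm_apply]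
  rw [this]; rfl

lemma hasDerivAt_comp_line (ℓ : E → ℝ) (hdiff : Differentiable ℝ ℓ) (x y : E) (t : ℝ) :
    HasDerivAt (fun t : ℝ => ℓ (x + t • (y - x)))
      ⟪gradient ℓ (x + t • (y - x)), y - x⟫ t := by
  have hγ : HasDerivAt (fun t : ℝ => x + t • (y - x)) (y - x) t := by
    simpa using ((hasDerivAt_id t).smul_const (y - x)).const_add x
  have hF := (hdiff (x + t • (y - x))).hasFDerivAt
  have := hF.comp_hasDerivAt t hγ
  rw [← fderiv_apply_eq_inner_gradient ℓ]; exact this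

lemma grad_convex_ineq (ℓ : E → ℝ) (hconv : ConvexOn ℝ Set.univ ℓ)
    (hdiff : Differentiable ℝ ℓ) (x y : E) :
    ⟪gradient ℓ x, y - x⟫ ≤ ℓ y - ℓ x := by
  have hφ : ConvexOn ℝ Set.univ (fun t : ℝ => ℓ (x + t • (y - x))) := by
    have := hconv.comp_affineMap (AffineMap.lineMap x y)
    simpa [Function.comp_def, AffineMap.lineMap_apply, add_comm] using this
  have hd := hasDerivAt_comp_line ℓ hdiff x y 0
  have := ConvexOn.le_slope_of_hasDerivAt (S := Set.univ) hφ (Set.mem_univ (0:ℝ))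
    (Set.mem_univ (1:ℝ)) one_pos (by simpa using hd)
  simpa [slope_def_field] using this

lemma descent_lemma (ℓ : E → ℝ) (hdiff : Differentiable ℝ ℓ) (L : ℝ) (hL : 0 < L)
    (hLip : ∀ u v, ‖gradient ℓ u - gradient ℓ v‖ ≤ L * ‖u - v‖) (x y : E) :
    ℓ y ≤ ℓ x + ⟪gradient ℓ x, y - x⟫ + L / 2 * ‖y - x‖ ^ 2 := by
  set d := y - x with hdd
  set ψ : ℝ → ℝ := fun t => L / 2 * t ^ 2 * ‖d‖ ^ 2 + t * ⟪gradient ℓ x, d⟫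
    - (ℓ (x + t • d) - ℓ x) with hψ
  have hder : ∀ t : ℝ, HasDerivAt ψ
      (L * t * ‖d‖ ^ 2 + ⟪gradient ℓ x, d⟫ - ⟪gradient ℓ (x + t • d), d⟫) t := by
    intro t
    have h1 : HasDerivAt (fun t : ℝ => L / 2 * t ^ 2 * ‖d‖ ^ 2 + t * ⟪gradient ℓ x, d⟫)
        (L * t * ‖d‖ ^ 2 + ⟪gradient ℓ x, d⟫) t := by
      have ha : HasDerivAt (fun t : ℝ => L / 2 * t ^ 2 * ‖d‖ ^ 2)
          (L * t * ‖d‖ ^ 2) t := by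
        have := ((hasDerivAt_pow 2 t).const_mul (L / 2)).mul_const (‖d‖ ^ 2)
        exact this.congr_deriv (by ring)
      have hb : HasDerivAt (fun t : ℝ => t * ⟪gradient ℓ x, d⟫) ⟪gradient ℓ x, d⟫ t := by
        simpa using (hasDerivAt_id t).mul_const (⟪gradient ℓ x, d⟫)
      exact ha.add hb
    have h2 : HasDerivAt (fun t : ℝ => ℓ (x + t • d) - ℓ x)
        ⟪gradient ℓ (x + t • d), d⟫ t := by
      simpa [hdd] using (hasDerivAt_comp_line ℓ hdiff x y t).sub_const (ℓ x)
    exact h1.sub h2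
  have hmono : MonotoneOn ψ (Set.Icc (0:ℝ) 1) := by
    apply monotoneOn_of_deriv_nonneg (convex_Icc 0 1)
    · exact Continuous.continuousOn (by
        have : Differentiable ℝ ψ := fun t => (hder t).differentiableAt
        exact this.continuous)
    · intro t _
      exact ((hder t).differentiableAt).differentiableWithinAt
    · intro t ht
      rw [interior_Icc] at ht
      rw [(hder t).deriv]
      have hcs : ⟪gradient ℓ (x + t • d) - gradient ℓ x, d⟫ ≤
          ‖gradient ℓ (x + t • d) - gradient ℓ x‖ * ‖d‖ := real_inner_le_norm _ _
      have hlip := hLip (x + t • d) x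
      have h3 : ‖x + t • d - x‖ = t * ‖d‖ := by
        rw [add_sub_cancel_left, norm_smul, Real.norm_eq_abs, abs_of_pos ht.1]
      rw [h3] at hlip
      have h4 : ⟪gradient ℓ (x + t • d) - gradient ℓ x, d⟫ ≤ L * t * ‖d‖ ^ 2 := by
        calc ⟪gradient ℓ (x + t • d) - gradient ℓ x, d⟫
            ≤ ‖gradient ℓ (x + t • d) - gradient ℓ x‖ * ‖d‖ := hcs
          _ ≤ L * (t * ‖d‖) * ‖d‖ := by
              apply mul_le_mul_of_nonneg_right hlip (norm_nonneg _)
          _ = L * t * ‖d‖ ^ 2 := by ring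
      rw [inner_sub_left] at h4
      linarith
  have h01 := hmono (Set.mem_Icc.2 ⟨le_refl 0, zero_le_one⟩)
    (Set.mem_Icc.2 ⟨zero_le_one, le_refl 1⟩) zero_le_one
  have hψ0 : ψ 0 = 0 := by simp [hψ]
  have hψ1 : ψ 1 = L / 2 * ‖d‖ ^ 2 + ⟪gradient ℓ x, d⟫ - (ℓ y - ℓ x) := by
    simp [hψ, hdd]
  rw [hψ0, hψ1] at h01
  linarith

end Aux

set_option maxHeartbeats 2000000 in
/-- the key one-step estimate for the aggregated iteration
(Lemma A.2 of the paper), valid at every `u ∈ Fix(T) ∩ U`. -/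
theorem stmt_4 {n : ℕ} (H : Matrix (Fin n) (Fin n) ℝ) (hH : H.PosDef)
    (D : EuclideanSpace ℝ (Fin n) → EuclideanSpace ℝ (Fin n))
    (hD : ∀ u₁ u₂, hNorm H (D u₁ - D u₂) ≤ hNorm H (u₁ - u₂))
    (ℓ : EuclideanSpace ℝ (Fin n) → ℝ)
    (hconv : ConvexOn ℝ Set.univ ℓ) (hdiff : Differentiable ℝ ℓ)
    (L : ℝ) (hL : 0 < L)
    (hLip : ∀ u v, ‖gradient ℓ u - gradient ℓ v‖ ≤ L * ‖u - v‖)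
    (α μ : ℝ) (hα : α ∈ Set.Ioo (0 : ℝ) 1) (hμ : μ ∈ Set.Ioo (0 : ℝ) 1)
    (s : ℝ) (hs : s ∈ Set.Ioo 0 (lambdaMin H hH.1 / L))
    (U : Set (EuclideanSpace ℝ (Fin n)))
    (hUne : U.Nonempty) (hUcl : IsClosed U) (hUco : Convex ℝ U)
    (T : EuclideanSpace ℝ (Fin n) → EuclideanSpace ℝ (Fin n))
    (hT : ∀ u, T u = (1 - α) • u + α • D u)
    (u vl vu : ℕ → EuclideanSpace ℝ (Fin n))
    (hu0 : u 0 ∈ U)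
    (hvl : ∀ k, vl (k + 1) = T (u k))
    (hvu : ∀ k, vu (k + 1) =
      u k - (s / ((k : ℝ) + 1)) • Matrix.toEuclideanLin H⁻¹ (gradient ℓ (u k)))
    (hproj : ∀ k, u (k + 1) ∈ U ∧ ∀ w ∈ U,
      hNorm H (u (k + 1) - (μ • vu (k + 1) + (1 - μ) • vl (k + 1))) ≤
        hNorm H (w - (μ • vu (k + 1) + (1 - μ) • vl (k + 1)))) :
    ∀ u', T u' = u' → u' ∈ U → ∀ k : ℕ,
      μ * s * (1 / ((k : ℝ) + 1)) * ℓ u' ≥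
        μ * s * (1 / ((k : ℝ) + 1)) * ℓ (vu (k + 1))
          - (1 / 2) * hNorm H (u' - u k) ^ 2
          + (1 / 2) * hNorm H (u' - u (k + 1)) ^ 2
          + (1 / 2) * hNorm H (((1 - μ) • vl (k + 1) + μ • vu (k + 1)) - u (k + 1)) ^ 2
          + ((1 - μ) * ((1 - α) / α) / 2) * hNorm H (u k - vl (k + 1)) ^ 2
          + (μ / 2) * (1 - s * (1 / ((k : ℝ) + 1)) * L / lambdaMin H hH.1) *
              hNorm H (u k - vu (k + 1)) ^ 2 := by
  intro u' hfix hU' k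
  have hα0 : (0:ℝ) < α := hα.1
  have hα1 : α < 1 := hα.2
  have hμ0 : (0:ℝ) < μ := hμ.1
  have hμ1 : μ < 1 := hμ.2
  set lam := lambdaMin H hH.1 with hlam
  have hs0 : 0 < s := hs.1
  have hlam0 : 0 < lam := by
    have h := hs.1.trans hs.2
    rcases div_pos_iff.1 h with ⟨h1, _⟩ | ⟨_, h2⟩
    · exact h1
    · linarith
  set β : ℝ := 1 / ((k : ℝ) + 1) with hβ
  have hβ0 : 0 < β := by
    rw [hβ]; positivity
  set g := gradient ℓ (u k) with hg
  set r := Matrix.toEuclideanLin H⁻¹ g with hr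
  have hS : ∀ x y : EuclideanSpace ℝ (Fin n), hIP H x y = hIP H y x :=
    fun x y => hIP_symm hH.1 x y
  have hvuk : vu (k + 1) = u k - (s * β) • r := by
    rw [hvu k, hr, hg, hβ, mul_one_div]
  -- D fixes u'
  have hDu' : D u' = u' := by
    have h1 := hfix
    rw [hT] at h1
    have h2 : α • D u' = α • u' := by
      calc α • D u' = ((1 - α) • u' + α • D u') - (1 - α) • u' := by module
        _ = u' - (1 - α) • u' := by rw [h1]
        _ = α • u' := by module
    exact smul_right_injective _ (ne_of_gt hα0) h2
  -- abbreviations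
  set p := u (k + 1) with hp
  set w' := μ • vu (k + 1) + (1 - μ) • vl (k + 1) with hw'
  set a := u' - u k with ha
  set b := u' - D (u k) with hb
  set A := hIP H a a with hA
  set Q := hIP H r r with hQdef
  -- projection variational inequality
  have F1 : hIP H (u' - p) (w' - p) ≤ 0 :=
    proj_vi hH hUco (hproj k).1 hU' (hproj k).2
  -- expansion of ‖u' - w'‖²
  have F2 : hIP H (u' - w') (u' - w') = hIP H (u' - p) (u' - p) + hIP H (w' - p) (w' - p)
      - 2 * hIP H (u' - p) (w' - p) := by
    rw [show u' - w' = (u' - p) - (w' - p) by module]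
    simp only [hIP_sub_left, hIP_sub_right]
    linarith [hS u' p, hS u' w', hS p w']
  -- convex-combination expansion
  have F3 : hIP H (u' - w') (u' - w') = (1 - μ) * hIP H (u' - vl (k+1)) (u' - vl (k+1))
      + μ * hIP H (u' - vu (k+1)) (u' - vu (k+1))
      - μ * (1 - μ) * hIP H (vl (k+1) - vu (k+1)) (vl (k+1) - vu (k+1)) := by
    rw [show u' - w' = (1 - μ) • (u' - vl (k+1)) + μ • (u' - vu (k+1)) by rw [hw']; module,
      show vl (k+1) - vu (k+1) = (u' - vu (k+1)) - (u' - vl (k+1)) by module]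
    simp only [hIP_add_left, hIP_add_right, hIP_sub_left, hIP_sub_right,
      hIP_smul_left, hIP_smul_right]
    linarith [hS u' (vl (k+1)), hS u' (vu (k+1)), hS (vl (k+1)) (vu (k+1))]
  -- nonexpansiveness estimate
  have hvlk : vl (k + 1) = (1 - α) • u k + α • D (u k) := by rw [hvl k, hT]
  have e1 : u' - vl (k + 1) = (1 - α) • a + α • b := by rw [hvlk, ha, hb]; module
  have e2 : u k - vl (k + 1) = α • (b - a) := by rw [hvlk, ha, hb]; module
  have hbb : hIP H b b ≤ A := by
    have h := hD u' (u k)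
    rw [hDu'] at h
    exact hIP_sq_mono hH h
  have eVl : hIP H (u' - vl (k+1)) (u' - vl (k+1)) = (1-α)^2 * A
      + (1-α)*α*(hIP H a b + hIP H b a) + α^2 * hIP H b b := by
    rw [e1]
    simp only [hIP_add_left, hIP_add_right, hIP_smul_left, hIP_smul_right]
    rw [hA]; ring
  have eLk : hIP H (u k - vl (k+1)) (u k - vl (k+1))
      = α^2 * (hIP H b b - hIP H b a - hIP H a b + A) := by
    rw [e2]
    simp only [hIP_sub_left, hIP_sub_right, hIP_smul_left, hIP_smul_right]
    rw [hA]; ring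
  have hdivLk : ((1-α)*α⁻¹) * hIP H (u k - vl (k+1)) (u k - vl (k+1))
      = (1-α)*α*(hIP H b b - hIP H b a - hIP H a b + A) := by
    rw [eLk]
    field_simp
  have F4 : hIP H (u' - vl (k+1)) (u' - vl (k+1))
      ≤ A - ((1-α)*α⁻¹) * hIP H (u k - vl (k+1)) (u k - vl (k+1)) := by
    have hkey : 0 ≤ α * (A - hIP H b b) := mul_nonneg hα0.le (by linarith)
    linarith [eVl, hdivLk, hkey]
  -- expansion of ‖u' - vu‖²
  have hra : hIP H r a = ⟪g, a⟫ := by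
    have h := hIP_inv_left hH g a
    rw [← hr] at h
    exact h
  have har : hIP H a r = hIP H r a := hS a r
  have eVu : hIP H (u' - vu (k+1)) (u' - vu (k+1))
      = A + 2 * (s*β) * ⟪g, a⟫ + (s*β)^2 * Q := by
    rw [show u' - vu (k+1) = a + (s*β) • r by rw [hvuk, ha]; module]
    simp only [hIP_add_left, hIP_add_right, hIP_smul_left, hIP_smul_right]
    rw [har, hra, hA, hQdef]; ring
  -- expansion of ‖u k - vu‖²
  have eNu : hIP H (u k - vu (k+1)) (u k - vu (k+1)) = (s*β)^2 * Q := by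
    rw [show u k - vu (k+1) = (s*β) • r by rw [hvuk]; module]
    simp only [hIP_smul_left, hIP_smul_right]
    rw [hQdef]; ring
  -- convexity inequality
  have F7 : ⟪g, a⟫ ≤ ℓ u' - ℓ (u k) := by
    rw [hg, ha]
    exact grad_convex_ineq ℓ hconv hdiff (u k) u'
  -- descent lemma
  have hQg : ⟪g, r⟫ = Q := by
    have h := hIP_inv_left hH g r
    rw [← hr] at h
    rw [hQdef]
    exact h.symm
  have hray : lam * ‖r‖ ^ 2 ≤ Q := by
    rw [hlam, hQdef]; exact rayleigh_low hH r
  have hrQ : ‖r‖ ^ 2 ≤ Q * lam⁻¹ := by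
    rw [← div_eq_mul_inv, le_div_iff₀ hlam0]
    linarith
  have F8 : ℓ (vu (k+1)) ≤ ℓ (u k) - (s*β) * Q + L / 2 * ((s*β)^2 * (Q * lam⁻¹)) := by
    have hdesc := descent_lemma ℓ hdiff L hL hLip (u k) (vu (k+1))
    have e8 : vu (k+1) - u k = (-(s*β)) • r := by rw [hvuk]; module
    rw [e8] at hdesc
    rw [real_inner_smul_right, norm_smul, Real.norm_eq_abs] at hdesc
    have habs : |(-(s*β))| = s*β := by
      rw [abs_neg, abs_of_pos (by positivity)]
    rw [habs] at hdesc
    rw [← hg] at hdesc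
    rw [hQg] at hdesc
    have hb2 : L / 2 * ((s*β) * ‖r‖) ^ 2 ≤ L / 2 * ((s*β)^2 * (Q * lam⁻¹)) := by
      have : ((s*β) * ‖r‖) ^ 2 = (s*β)^2 * ‖r‖^2 := by ring
      rw [this]
      apply mul_le_mul_of_nonneg_left _ (by positivity)
      exact mul_le_mul_of_nonneg_left hrQ (by positivity)
    linarith
  -- positivity facts
  have hQ0 : 0 ≤ Q := hIP_self_nonneg hH r
  have hVD0 : 0 ≤ hIP H (vl (k+1) - vu (k+1)) (vl (k+1) - vu (k+1)) := hIP_self_nonneg hH _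
  have hμsβ : 0 ≤ μ * (s * β) := by positivity
  -- scaled inequalities
  have G7 : μ * (s*β) * ⟪g, a⟫ ≤ μ * (s*β) * (ℓ u' - ℓ (u k)) :=
    mul_le_mul_of_nonneg_left F7 hμsβ
  have G8 : μ * (s*β) * ℓ (vu (k+1))
      ≤ μ * (s*β) * (ℓ (u k) - (s*β) * Q + L / 2 * ((s*β)^2 * (Q * lam⁻¹))) :=
    mul_le_mul_of_nonneg_left F8 hμsβ
  have G4 : (1-μ)/2 * hIP H (u' - vl (k+1)) (u' - vl (k+1))
      ≤ (1-μ)/2 * (A - ((1-α)*α⁻¹) * hIP H (u k - vl (k+1)) (u k - vl (k+1))) :=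
    mul_le_mul_of_nonneg_left F4 (by linarith)
  have G3 : 0 ≤ μ * (1-μ) * hIP H (vl (k+1) - vu (k+1)) (vl (k+1) - vu (k+1)) :=
    mul_nonneg (mul_nonneg hμ0.le (by linarith)) hVD0
  -- rewrite goal
  rw [ge_iff_le]
  rw [show ((1 - μ) • vl (k+1) + μ • vu (k+1)) - u (k+1) = w' - p by rw [hw', hp]; module]
  simp only [hNorm_sq hH]
  rw [eNu, ← hA]
  simp only [div_eq_mul_inv]
  -- final arithmetic
  have eVu2 : μ/2 * hIP H (u' - vu (k+1)) (u' - vu (k+1))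
      = μ/2 * A + μ * (s*β) * ⟪g, a⟫ + μ/2 * ((s*β)^2 * Q) := by
    rw [eVu]; ring
  linarith [F1, F2, F3, G3, G4, eVu2, G7, G8]
end
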